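/- With the weighted-graph and unit potential flow setup below, fix η > 0 and form the modified graph Ĝ by adding a new vertex σ and the edge (σ, s) (in both orientations) with weight η d_s. Extend the voltages by v̂_σ := R_s + 1/(η d_s) =: R̂_σ and v̂_x := v_x for x ∈ V, and extend the flow by f̂_{σs} := 1 = −f̂_{sσ} and f̂ := f on E; let |f̂⟩ = (1/√(2R̂_σ)) Σ_{(x,y) ∈ Ê, ŵ_{xy} > 0} (f̂_{xy}/√(ŵ_{xy})) |xy⟩ be the electric flow state of Ĝ in the edge space ℓ(Ê), and view |f⟩ ∈ ℓ(E) ⊆ ℓ(Ê). Then ⟨f̂|f⟩ = √(R_s/R̂_σ); in particular |⟨f̂|f⟩|² = R_s/R̂_σ = 1/(1 + 1/(η R_s d_s)). -/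

import Mathlib

open scoped InnerProductSpace BigOperators

namespace Elfs

variable {V : Type*} [Fintype V] [DecidableEq V]

/-- The degree of a vertex: `d_x = Σ_y w_{xy}`. -/
noncomputable def deg (w : V → V → ℝ) (x : V) : ℝ := ∑ y, w x y

/-- The basis state `|xy⟩` of the edge space. -/
noncomputable def ket (p : V × V) : EuclideanSpace ℂ (V × V) :=
  EuclideanSpace.single p 1

/-- The star state `|φ_x⟩ = (1/√d_x) Σ_y √(w_{xy}) |xy⟩`. -/
noncomputable def starState (w : V → V → ℝ) (x : V) : EuclideanSpace ℂ (V × V) :=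
  ((Real.sqrt (deg w x) : ℂ))⁻¹ • ∑ y, ((Real.sqrt (w x y) : ℝ) : ℂ) • ket (x, y)

/-- The electric flow state `|f⟩ = (1/√(2 R_s)) Σ_{(x,y)} (f_{xy}/√(w_{xy})) |xy⟩`
for the potential flow `f_{xy} = w_{xy}(v_x − v_y)` (terms with `w_{xy} = 0` contribute `0`,
matching the restriction of the sum to edges of positive weight). -/
noncomputable def flowState (w : V → V → ℝ) (v : V → ℝ) (s : V) :
    EuclideanSpace ℂ (V × V) :=
  ((Real.sqrt (2 * v s) : ℂ))⁻¹ •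
    ∑ p : V × V, ((w p.1 p.2 * (v p.1 - v p.2) / Real.sqrt (w p.1 p.2) : ℝ) : ℂ) • ket p

/-- The symmetric subspace `span{|xy⟩ + |yx⟩ : (x,y) ∈ E}`. -/
noncomputable def symSpan (E : Set (V × V)) : Submodule ℂ (EuclideanSpace ℂ (V × V)) :=
  Submodule.span ℂ {u | ∃ p ∈ E, u = ket p + ket p.swap}

/-- `Π₊`, the orthogonal projection onto the symmetric subspace. -/
noncomputable def projSym (E : Set (V × V)) :
    EuclideanSpace ℂ (V × V) →ₗ[ℂ] EuclideanSpace ℂ (V × V) :=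
  (symSpan E).subtype ∘ₗ (Submodule.orthogonalProjectionOnto (symSpan E)).toLinearMap

end Elfs

namespace Elfs

variable {V : Type*} [Fintype V] [DecidableEq V]

/-- Weights of the modified graph `Ĝ`, with a new vertex `σ = none` attached to the
source `s` by an edge of weight `η d_s`. -/
noncomputable def what (w : V → V → ℝ) (s : V) (η : ℝ) : Option V → Option V → ℝ
  | some x, some y => w x y
  | none, some y => if y = s then η * deg w s else 0
  | some x, none => if x = s then η * deg w s else 0
  | none, none => 0

/-- The flow on `Ĝ`: it is `f` on `E` and pushes a unit flow along the new edge `(σ, s)`. -/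
noncomputable def fhatFlow (w : V → V → ℝ) (v : V → ℝ) (s : V) :
    Option V → Option V → ℝ
  | some x, some y => w x y * (v x - v y)
  | none, some y => if y = s then 1 else 0
  | some x, none => if x = s then -1 else 0
  | none, none => 0

end Elfs

open Elfs

lemma coord_eval {ι : Type*} [Fintype ι] [DecidableEq ι] (c : ℂ) (d : ι → ℂ) (q : ι) :
    ((c • ∑ p : ι, d p • EuclideanSpace.single p (1:ℂ)) : EuclideanSpace ℂ ι) q = c * d q := by
  rw [PiLp.smul_apply]
  congr 1
  rw [show ((∑ p : ι, d p • EuclideanSpace.single p (1:ℂ)) : EuclideanSpace ℂ ι) q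
      = ∑ p : ι, (d p • EuclideanSpace.single p (1:ℂ) : EuclideanSpace ℂ ι) q from
    map_sum (PiLp.projₗ (𝕜 := ℂ) 2 (fun _ : ι => ℂ) q) _ _]
  simp [EuclideanSpace.single_apply]


/-- Overlap of the electric flow states of `G` and of the modified graph `Ĝ`:
`⟨f̂|f⟩ = √(R_s/R̂_σ)`, so `|⟨f̂|f⟩|² = R_s/R̂_σ = 1/(1 + 1/(η R_s d_s))`. -/
theorem stmt11 {V : Type*} [Fintype V] [DecidableEq V]
    (E : Set (V × V)) (w : V → V → ℝ) (s : V) (M : Finset V)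
    (hE : ∀ p : V × V, p ∈ E ↔ p.swap ∈ E)
    (hw0 : ∀ x y, 0 ≤ w x y) (hwsymm : ∀ x y, w x y = w y x)
    (hwE : ∀ x y, (x, y) ∉ E → w x y = 0)
    (hdeg : ∀ x, 0 < deg w x)
    (hM : M.Nonempty) (hsM : s ∉ M)
    (v : V → ℝ) (hvM : ∀ y ∈ M, v y = 0) (hRpos : 0 < v s)
    (hunit : ∑ y, w s y * (v s - v y) = 1)
    (hcons : ∀ x, x ≠ s → x ∉ M → ∑ y, w x y * (v x - v y) = 0)
    (η : ℝ) (hη : 0 < η)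
    (Rhat : ℝ) (hRhat : Rhat = v s + 1 / (η * deg w s))
    (fhat : EuclideanSpace ℂ (Option V × Option V))
    (hfhat : fhat = ((Real.sqrt (2 * Rhat) : ℂ))⁻¹ •
        ∑ p : Option V × Option V,
          ((fhatFlow w v s p.1 p.2 / Real.sqrt (what w s η p.1 p.2) : ℝ) : ℂ) •
            EuclideanSpace.single p (1 : ℂ))
    (femb : EuclideanSpace ℂ (Option V × Option V))
    (hfemb : femb = ((Real.sqrt (2 * v s) : ℂ))⁻¹ •
        ∑ p : V × V,
          ((w p.1 p.2 * (v p.1 - v p.2) / Real.sqrt (w p.1 p.2) : ℝ) : ℂ) •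
            EuclideanSpace.single (some p.1, some p.2) (1 : ℂ)) :
    ⟪fhat, femb⟫_ℂ = ((Real.sqrt (v s / Rhat) : ℝ) : ℂ) ∧
    ‖⟪fhat, femb⟫_ℂ‖ ^ 2 = v s / Rhat ∧
    v s / Rhat = (1 + 1 / (η * (v s * deg w s)))⁻¹ := by
  have hds := hdeg s
  have hRhatpos : 0 < Rhat := by rw [hRhat]; positivity
  -- energy identity
  have energy : ∑ x, ∑ y, w x y * (v x - v y)^2 = 2 * v s := by
    have hA : ∑ x, v x * ∑ y, w x y * (v x - v y) = v s := by
      rw [Finset.sum_eq_single s]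
      · rw [hunit]; ring
      · intro x _ hx
        by_cases hxM : x ∈ M
        · rw [hvM x hxM]; ring
        · rw [hcons x hx hxM]; ring
      · intro h; exact absurd (Finset.mem_univ s) h
    have hB : ∑ x, ∑ y, v y * (w x y * (v x - v y)) = - v s := by
      rw [Finset.sum_comm]
      have : ∀ y : V, ∑ x, v y * (w x y * (v x - v y))
          = -(v y * ∑ x, w y x * (v y - v x)) := by
        intro y
        rw [Finset.mul_sum, ← Finset.sum_neg_distrib]
        refine Finset.sum_congr rfl fun x _ => ?_
        rw [hwsymm x y]; ring
      simp_rw [this]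
      rw [Finset.sum_neg_distrib, hA]
    have expand : ∀ x y : V, w x y * (v x - v y)^2
        = v x * (w x y * (v x - v y)) - v y * (w x y * (v x - v y)) := fun x y => by ring
    simp_rw [expand, Finset.sum_sub_distrib, ← Finset.mul_sum]
    rw [hA, hB]; ring
  -- the key sum
  have key : ∑ p : V × V, (w p.1 p.2 * (v p.1 - v p.2) / Real.sqrt (w p.1 p.2))^2
      = 2 * v s := by
    rw [Fintype.sum_prod_type, ← energy]
    refine Finset.sum_congr rfl fun x _ => Finset.sum_congr rfl fun y _ => ?_
    rcases (hw0 x y).eq_or_lt with h|h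
    · simp [← h]
    · rw [div_pow, Real.sq_sqrt h.le]
      field_simp
  -- coordinates of fhat
  have hcoord : ∀ q : Option V × Option V, fhat q =
      (((Real.sqrt (2*Rhat) : ℝ) : ℂ))⁻¹ *
        ((fhatFlow w v s q.1 q.2 / Real.sqrt (what w s η q.1 q.2) : ℝ) : ℂ) := by
    intro q
    rw [hfhat]
    exact coord_eval _ _ q
  -- inner product
  have hipc : ⟪fhat, femb⟫_ℂ =
      ((((Real.sqrt (2*Rhat))⁻¹ * (Real.sqrt (2*v s))⁻¹ * (2 * v s)) : ℝ) : ℂ) := by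
    rw [hfemb, inner_smul_right, inner_sum]
    simp_rw [inner_smul_right, EuclideanSpace.inner_single_right, hcoord]
    have hterm : ∀ p : V × V,
        ((w p.1 p.2 * (v p.1 - v p.2) / Real.sqrt (w p.1 p.2) : ℝ) : ℂ) *
          ((1:ℂ) * (starRingEnd ℂ) ((((Real.sqrt (2*Rhat) : ℝ) : ℂ))⁻¹ *
            ((fhatFlow w v s (some p.1) (some p.2) /
              Real.sqrt (what w s η (some p.1) (some p.2)) : ℝ) : ℂ)))
        = (((Real.sqrt (2*Rhat))⁻¹ *
            (w p.1 p.2 * (v p.1 - v p.2) / Real.sqrt (w p.1 p.2))^2 : ℝ) : ℂ) := by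
      intro p
      have h1 : fhatFlow w v s (some p.1) (some p.2) = w p.1 p.2 * (v p.1 - v p.2) := rfl
      have h2 : what w s η (some p.1) (some p.2) = w p.1 p.2 := rfl
      rw [h1, h2, map_mul, map_inv₀, Complex.conj_ofReal, Complex.conj_ofReal]
      push_cast
      ring
    simp_rw [hterm]
    rw [← Complex.ofReal_sum, ← Complex.ofReal_inv, ← Complex.ofReal_mul]
    congr 1
    rw [← Finset.mul_sum, key]
    ring
  -- real sqrt identity
  have hre : (Real.sqrt (2*Rhat))⁻¹ * (Real.sqrt (2*v s))⁻¹ * (2*v s)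
      = Real.sqrt (v s / Rhat) := by
    have h2a : (0:ℝ) < 2*v s := by linarith
    have step : (Real.sqrt (2*Rhat))⁻¹ * (Real.sqrt (2*v s))⁻¹ * (2*v s)
        = (2*v s)/Real.sqrt (2*v s) * (Real.sqrt (2*Rhat))⁻¹ := by ring
    rw [step, Real.div_sqrt, ← Real.sqrt_inv, ← Real.sqrt_mul h2a.le]
    congr 1
    field_simp
  have part1 : ⟪fhat, femb⟫_ℂ = ((Real.sqrt (v s / Rhat) : ℝ) : ℂ) := by
    rw [hipc, hre]
  refine ⟨part1, ?_, ?_⟩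
  · rw [part1, Complex.norm_real, Real.norm_eq_abs,
      abs_of_nonneg (Real.sqrt_nonneg _), Real.sq_sqrt]
    positivity
  · rw [hRhat]
    have h1 : η * deg w s ≠ 0 := by positivity
    have h2 : v s ≠ 0 := ne_of_gt hRpos
    have h3 : v s + 1 / (η * deg w s) ≠ 0 := by positivity
    have h4 : (1:ℝ) + 1 / (η * (v s * deg w s)) ≠ 0 := by positivity
    field_simp
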